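/- Suppose ⟨X_n, π^{n+1}_n : n ∈ ω⟩ is an inverse system of compact Hausdorff spaces with surjective continuous bonding maps, X = lim← X_n is the inverse limit, p ∈ X with projections p_n = π^ω_n(p), such that: (A) each p_n is a weak P_{ℵ_n}-point in X_n; (B) each w(X_n) < ℵ_ω; (C) each (π^n_0)⁻¹{p_0} is nowhere dense in X_n. Then for every regular uncountable cardinal κ, no κ-sequence of points of X distinct from p converges to p, and χ(p, X) = w(X) = ℵ_ω provided w(X_n) = ℵ_n for each n. -/

import Mathlib

open Cardinal TopologicalSpace

/-- The weight of a topological space: the least cardinality of a base. -/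
noncomputable def weight (X : Type*) [TopologicalSpace X] : Cardinal :=
  ⨅ B : {B : Set (Set X) // IsTopologicalBasis B}, #B.1

/-- `B` is a local base at `p`. -/
def IsLocalBase {X : Type*} [TopologicalSpace X] (p : X) (B : Set (Set X)) : Prop :=
  (∀ U ∈ B, U ∈ nhds p) ∧ ∀ V ∈ nhds p, ∃ U ∈ B, U ⊆ V

/-- The character of a point: the least cardinality of a local base at it. -/
noncomputable def character {X : Type*} [TopologicalSpace X] (p : X) : Cardinal :=
  ⨅ B : {B : Set (Set X) // IsLocalBase p B}, #B.1

/-- A `κ`-sequence `f` converges to `p` iff every neighborhood of `p` contains all but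
fewer than `κ` of its terms. -/
def ConvergesTo {ι X : Type*} [TopologicalSpace X] (κ : Cardinal) (f : ι → X) (p : X) : Prop :=
  ∀ U ∈ nhds p, #{α | f α ∉ U} < κ

/-- The bonding map `π^n_0 : X_n → X_0` of an inverse system. -/
def bond {X : ℕ → Type*} (π : ∀ n, X (n + 1) → X n) : ∀ n, X n → X 0
  | 0 => id
  | n + 1 => fun z => bond π n (π n z)

section aux
variable {X : ℕ → Type} (π : ∀ n, X (n + 1) → X n)

/-- iterated bonding map downward -/
def down : ∀ (k m : ℕ), X (m + k) → X m
  | 0, _, z => z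
  | k+1, m, z => down k m (π (m + k) z)

lemma down_thread (x : ∀ n, X n) (hx : ∀ n, π n (x (n + 1)) = x n) :
    ∀ k m, down π k m (x (m + k)) = x m := by
  intro k
  induction k with
  | zero => intro m; rfl
  | succ k ih => intro m; show down π k m (π (m+k) (x (m+k+1))) = x m; rw [hx (m+k)]; exact ih m

lemma down_cont [∀ n, TopologicalSpace (X n)] (hc : ∀ n, Continuous (π n)) :
    ∀ k m, Continuous (down π k m) := by
  intro k
  induction k with
  | zero => intro m; exact continuous_id
  | succ k ih => intro m; exact (ih m).comp (hc (m+k))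

variable (hsurj : ∀ n, Function.Surjective (π n))

/-- upward extension by choice -/
noncomputable def up (n : ℕ) (w : X n) : ∀ k, X (n + k)
  | 0 => w
  | k+1 => (hsurj (n + k) (up n w k)).choose

lemma up_spec (n : ℕ) (w : X n) (k : ℕ) :
    π (n + k) (up π hsurj n w (k+1)) = up π hsurj n w k :=
  (hsurj (n + k) (up π hsurj n w k)).choose_spec

lemma up_congr (n : ℕ) (w : X n) {j j' : ℕ} (h : j = j') (pf : X (n + j) = X (n + j')) :
    cast pf (up π hsurj n w j) = up π hsurj n w j' := by subst h; exact cast_eq _ _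

lemma down_congr {j j' m : ℕ} (h : j = j') (z : X (m + j)) (pf : X (m + j) = X (m + j')) :
    down π j' m (cast pf z) = down π j m z := by subst h; rw [cast_eq]

lemma pi_cast {a b : ℕ} (h : a = b) (z : X (a + 1)) (pf : X (a + 1) = X (b + 1))
    (pf' : X a = X b) : π b (cast pf z) = cast pf' (π a z) := by
  subst h; rw [cast_eq, cast_eq]

lemma pi_down (m : ℕ) : ∀ (k : ℕ) (z : X (m + (k+1))) (pf : X (m + (k+1)) = X (m + 1 + k)),
    π m (down π k (m+1) (cast pf z)) = down π (k+1) m z := by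
  intro k
  induction k with
  | zero => intro z pf; show π m (cast pf z) = π (m + 0) z; rw [cast_eq]; rfl
  | succ k ih =>
      intro z pf
      have h : m + (k+1) = m + 1 + k := by omega
      have pf' : X (m + (k+1)) = X (m + 1 + k) := congrArg X h
      show π m (down π k (m+1) (π (m+1+k) (cast pf z))) = down π (k+1) m (π (m + (k+1)) z)
      rw [pi_cast π h (pf := pf) (pf' := pf')]
      exact ih _ pf'

lemma exists_thread (hsurj : ∀ n, Function.Surjective (π n)) (n : ℕ) (w : X n) :
    ∃ x : {f : ∀ n, X n // ∀ n, π n (f (n + 1)) = f n}, x.1 n = w := by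
  classical
  set y : ∀ m, X m := fun m =>
    if h : n ≤ m then cast (congrArg X (Nat.add_sub_cancel' h)) (up π hsurj n w (m - n))
    else down π (n - m) m (cast (congrArg X (Nat.add_sub_cancel' (le_of_not_ge h)).symm) w)
    with hy
  have hyn : y n = w := by
    rw [hy]
    simp only [le_refl, dif_pos]
    exact up_congr π hsurj n w (Nat.sub_self n) _
  have hcomp : ∀ m, π m (y (m+1)) = y m := by
    intro m
    by_cases hm : n ≤ m
    · have hm1 : n ≤ m + 1 := le_trans hm (Nat.le_succ m)
      rw [hy]
      simp only [hm, hm1, dif_pos]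
      obtain ⟨k, rfl⟩ := Nat.le.dest hm
      rw [up_congr π hsurj n w (show n + k + 1 - n = k + 1 by omega),
          up_congr π hsurj n w (show n + k - n = k by omega)]
      exact up_spec π hsurj n w k
    · by_cases hm1 : n ≤ m + 1
      · have hn : n = m + 1 := by omega
        subst hn
        rw [hy]
        simp only [le_refl, dif_pos, hm, dif_neg, not_false_iff]
        rw [up_congr π hsurj (m+1) w (Nat.sub_self (m+1)),
            down_congr π (show (1:ℕ) = m + 1 - m by omega) w]
        rfl
      · rw [hy]
        simp only [hm, hm1, dif_neg, not_false_iff]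
        have hz : n = m + (n - (m+1) + 1) := by omega
        have key := pi_down π m (n - (m+1)) (cast (congrArg X hz) w)
          (congrArg X (show m + (n - (m+1) + 1) = m + 1 + (n - (m+1)) by omega))
        rw [cast_cast] at key
        have key2 := down_congr π (show n - (m+1) + 1 = n - m by omega)
          (cast (congrArg X hz) w)
          (congrArg X (show m + (n - (m+1) + 1) = m + (n - m) by omega))
        rw [cast_cast] at key2
        exact key.trans key2.symm
  exact ⟨⟨y, hcomp⟩, hyn⟩


lemma cast_cont [∀ n, TopologicalSpace (X n)] {a b : ℕ} (h : a = b) :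
    Continuous (fun z : X a => cast (congrArg X h) z) := by
  subst h; exact continuous_id

/-- bonding map from level `N` down to level `i ≤ N` -/
def projLE {i N : ℕ} (h : i ≤ N) : X N → X i :=
  fun z => down π (N - i) i (cast (congrArg X (Nat.add_sub_cancel' h).symm) z)

lemma projLE_cont [∀ n, TopologicalSpace (X n)] (hc : ∀ n, Continuous (π n)) {i N : ℕ}
    (h : i ≤ N) : Continuous (projLE π h) :=
  (down_cont π hc _ _).comp (cast_cont (X := X) (Nat.add_sub_cancel' h).symm)

lemma thread_cast (x : ∀ n, X n) {a b : ℕ} (h : a = b) :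
    cast (congrArg X h) (x a) = x b := by subst h; rfl

lemma projLE_thread (x : ∀ n, X n) (hx : ∀ n, π n (x (n + 1)) = x n) {i N : ℕ} (h : i ≤ N) :
    projLE π h (x N) = x i := by
  unfold projLE
  rw [thread_cast x (Nat.add_sub_cancel' h).symm]
  exact down_thread π x hx _ _

lemma bond_thread (x : ∀ n, X n) (hx : ∀ n, π n (x (n + 1)) = x n) :
    ∀ n, bond π n (x n) = x 0 := by
  intro n
  induction n with
  | zero => rfl
  | succ n ih => show bond π n (π n (x (n+1))) = x 0; rw [hx n]; exact ih

lemma bond_cont [∀ n, TopologicalSpace (X n)] (hc : ∀ n, Continuous (π n)) (n : ℕ) :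
    Continuous (bond π n) := by
  induction n with
  | zero => exact continuous_id
  | succ n ih => exact ih.comp (hc n)

variable [∀ n, TopologicalSpace (X n)]

/-- basic neighborhoods in the inverse limit -/
lemma key_nbhd (hc : ∀ n, Continuous (π n))
    (x : {f : ∀ n, X n // ∀ n, π n (f (n + 1)) = f n})
    (U : Set {f : ∀ n, X n // ∀ n, π n (f (n + 1)) = f n}) (hU : U ∈ nhds x) :
    ∃ (n : ℕ) (W : Set (X n)), IsOpen W ∧ x.1 n ∈ W ∧
      (fun y : {f : ∀ n, X n // ∀ n, π n (f (n + 1)) = f n} => y.1 n) ⁻¹' W ⊆ U := by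
  classical
  rw [nhds_induced] at hU
  obtain ⟨V, hV, hVU⟩ := Filter.mem_comap.mp hU
  rw [nhds_pi] at hV
  obtain ⟨I, t, ht, hsub⟩ := Filter.mem_pi'.mp hV
  set n := I.sup id with hn
  have hle : ∀ i ∈ I, i ≤ n := fun i hi => Finset.le_sup (f := id) hi
  set C : ℕ → Set (X n) := fun i =>
    if h : i ≤ n then projLE π h ⁻¹' interior (t i) else Set.univ with hCdef
  refine ⟨n, ⋂ i ∈ I, C i, ?_, ?_, ?_⟩
  · refine isOpen_biInter_finset fun i _ => ?_
    rw [hCdef]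
    by_cases h : i ≤ n
    · simp only [h, dif_pos]
      exact isOpen_interior.preimage (projLE_cont π hc h)
    · simp only [h, dif_neg, not_false_iff]
      exact isOpen_univ
  · refine Set.mem_iInter₂.mpr fun i hi => ?_
    rw [hCdef]
    simp only [hle i hi, dif_pos]
    show projLE π _ (x.1 n) ∈ interior (t i)
    rw [projLE_thread π x.1 x.2]
    exact mem_interior_iff_mem_nhds.mpr (ht i)
  · intro y hy
    apply hVU
    apply hsub
    intro i hi
    have hyi := Set.mem_iInter₂.mp hy i hi
    rw [hCdef] at hyi
    simp only [hle i hi, dif_pos] at hyi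
    have : projLE π (hle i hi) (y.1 n) ∈ interior (t i) := hyi
    rw [projLE_thread π y.1 y.2] at this
    exact interior_subset this

/-- in a neighborhood of any point of the limit there is a point whose 0-th coordinate
differs from `p`'s -/
lemma exists_ne_zero [∀ n, T2Space (X n)] (hc : ∀ n, Continuous (π n)) (hsurj : ∀ n, Function.Surjective (π n))
    (p x : {f : ∀ n, X n // ∀ n, π n (f (n + 1)) = f n})
    (hC : ∀ n, IsNowhereDense (bond π n ⁻¹' {p.1 0}))
    (U : Set {f : ∀ n, X n // ∀ n, π n (f (n + 1)) = f n}) (hU : U ∈ nhds x) :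
    ∃ y ∈ U, y.1 0 ≠ p.1 0 := by
  obtain ⟨n, W, hWopen, hxW, hWU⟩ := key_nbhd π hc x U hU
  have hclosed : IsClosed (bond π n ⁻¹' {p.1 0}) :=
    isClosed_singleton.preimage (bond_cont π hc n)
  have : ¬ W ⊆ bond π n ⁻¹' {p.1 0} := by
    intro hsubW
    have : W ⊆ interior (closure (bond π n ⁻¹' {p.1 0})) := by
      rw [hclosed.closure_eq]
      exact hWopen.subset_interior_iff.mpr hsubW
    rw [hC n] at this
    exact this hxW
  obtain ⟨w, hwW, hwne⟩ := Set.not_subset.mp this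
  obtain ⟨y, hy⟩ := exists_thread π hsurj n w
  refine ⟨y, hWU (by simpa [hy] using hwW), ?_⟩
  rw [← bond_thread π y.1 y.2 n, hy]
  simpa using hwne

end aux

section wc
variable {Y : Type*} [TopologicalSpace Y]

lemma weight_le {B : Set (Set Y)} (hB : IsTopologicalBasis B) : weight Y ≤ #B :=
  ciInf_le (OrderBot.bddBelow _) (⟨B, hB⟩ : {B : Set (Set Y) // IsTopologicalBasis B})

lemma nonempty_basis_subtype : Nonempty {B : Set (Set Y) // IsTopologicalBasis B} :=
  ⟨⟨_, isTopologicalBasis_opens⟩⟩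

lemma nonempty_localbase_subtype (p : Y) : Nonempty {B : Set (Set Y) // IsLocalBase p B} :=
  ⟨⟨{V | V ∈ nhds p}, fun _ hU => hU, fun V hV => ⟨V, hV, subset_rfl⟩⟩⟩

lemma exists_basis_weight : ∃ B : Set (Set Y), IsTopologicalBasis B ∧ #B = weight Y := by
  haveI := nonempty_basis_subtype (Y := Y)
  have := csInf_mem (Set.range_nonempty
    (fun B : {B : Set (Set Y) // IsTopologicalBasis B} => #B.1))
  obtain ⟨B, hB⟩ := this
  exact ⟨B.1, B.2, hB⟩

lemma character_le {p : Y} {B : Set (Set Y)} (hB : IsLocalBase p B) : character p ≤ #B :=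
  ciInf_le (OrderBot.bddBelow _) (⟨B, hB⟩ : {B : Set (Set Y) // IsLocalBase p B})

lemma le_character {p : Y} {c : Cardinal} (h : ∀ B : Set (Set Y), IsLocalBase p B → c ≤ #B) :
    c ≤ character p := by
  haveI := nonempty_localbase_subtype p
  exact le_ciInf fun B => h B.1 B.2

lemma character_le_weight (p : Y) : character p ≤ weight Y := by
  haveI := nonempty_basis_subtype (Y := Y)
  refine le_ciInf fun ⟨B, hB⟩ => ?_
  refine le_trans (character_le (B := {U ∈ B | p ∈ U}) ?_) (mk_le_mk_of_subset (Set.sep_subset _ _))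
  constructor
  · exact fun U hU => (hB.isOpen hU.1).mem_nhds hU.2
  · intro V hV
    obtain ⟨U, hUB, hpU, hUV⟩ := hB.mem_nhds_iff.mp hV
    exact ⟨U, ⟨hUB, hpU⟩, hUV⟩

end wc

lemma aleph_omega_eq : aleph Ordinal.omega0 = ⨆ n : ℕ, aleph n := by
  apply le_antisymm
  · rw [aleph_limit Ordinal.isSuccLimit_omega0]
    haveI : Nonempty (Set.Iio Ordinal.omega0) := ⟨⟨0, Ordinal.omega0_pos⟩⟩
    apply ciSup_le
    rintro ⟨a, ha⟩
    obtain ⟨n, rfl⟩ := Ordinal.lt_omega0.mp ha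
    exact le_ciSup (Cardinal.bddAbove_range _) n
  · exact ciSup_le fun n => aleph_le_aleph.mpr (Ordinal.nat_lt_omega0 n).le

lemma lt_aleph_omega {κ : Cardinal} (h : κ < aleph Ordinal.omega0) : ∃ n : ℕ, κ < aleph n := by
  rw [aleph_omega_eq] at h
  exact (lt_ciSup_iff (Cardinal.bddAbove_range _)).mp h

lemma aleph_le_aleph_omega (n : ℕ) : aleph n ≤ aleph Ordinal.omega0 :=
  aleph_le_aleph.mpr (Ordinal.nat_lt_omega0 n).le

lemma lift_aleph_nat (n : ℕ) :
    Cardinal.lift.{v, 0} (aleph (n : Ordinal.{0})) = aleph (n : Ordinal.{v}) := by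
  rw [lift_aleph, Ordinal.lift_natCast]

lemma lift_aleph_omega :
    Cardinal.lift.{v, 0} (aleph Ordinal.omega0.{0}) = aleph Ordinal.omega0.{v} := by
  rw [lift_aleph, Ordinal.lift_omega0]


/-- Suppose `⟨X_n, π^{n+1}_n⟩` is an inverse system of compact Hausdorff spaces with
continuous surjective bonding maps, `p` a point of the inverse limit with projections
`p_n`, such that (A) each `p_n` is a weak `P_{ℵ_n}`-point of `X_n`, (B) each
`w(X_n) < ℵ_ω`, and (C) each `(π^n_0)⁻¹{p_0}` is nowhere dense in `X_n`.  Then for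
every regular uncountable `κ`, no `κ`-sequence of points distinct from `p` converges to
`p`; and if moreover `w(X_n) = ℵ_n` for each `n`, then `χ(p,X) = w(X) = ℵ_ω`. -/
theorem inverse_limit_lemma (X : ℕ → Type) [∀ n, TopologicalSpace (X n)]
    [∀ n, CompactSpace (X n)] [∀ n, T2Space (X n)]
    (π : ∀ n, X (n + 1) → X n) (hcont : ∀ n, Continuous (π n))
    (hsurj : ∀ n, Function.Surjective (π n))
    (p : {f : ∀ n, X n // ∀ n, π n (f (n + 1)) = f n})
    (hA : ∀ n, ∀ S : Set (X n), S ⊆ {p.1 n}ᶜ → #S < aleph n → p.1 n ∉ closure S)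
    (hB : ∀ n, weight (X n) < aleph Ordinal.omega0)
    (hC : ∀ n, IsNowhereDense (bond π n ⁻¹' {p.1 0})) :
    (∀ κ : Cardinal, κ.IsRegular → ℵ₀ < κ →
      ∀ f : κ.ord.ToType → {f : ∀ n, X n // ∀ n, π n (f (n + 1)) = f n},
        (∀ α, f α ≠ p) → ¬ ConvergesTo κ f p) ∧
    ((∀ n, weight (X n) = aleph n) →
      character p = aleph Ordinal.omega0 ∧
      weight {f : ∀ n, X n // ∀ n, π n (f (n + 1)) = f n} = aleph Ordinal.omega0) := by
  classical
  constructor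
  · intro κ hreg hκ f hf hconv
    have hmk : #κ.ord.ToType = κ := by rw [Cardinal.mk_toType, Cardinal.card_ord]
    have hex : ∀ α, ∃ n, (f α).1 n ≠ p.1 n := by
      intro α; by_contra h; push_neg at h; exact hf α (Subtype.ext (funext h))
    set g : κ.ord.ToType → ℕ := fun α => (hex α).choose with hg
    have hgspec : ∀ α, (f α).1 (g α) ≠ p.1 (g α) := fun α => (hex α).choose_spec
    obtain ⟨m', hm⟩ := Cardinal.infinite_pigeonhole (fun α => ULift.up (g α))
      (by rw [hmk]; exact hreg.aleph0_le)
      (by rw [Cardinal.mk_uLift, Cardinal.mk_nat, Cardinal.lift_aleph0, hmk, hreg.cof_eq]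
          exact hκ)
    set m := m'.down with hmdef
    have hpre : (fun α => ULift.up (g α)) ⁻¹' {m'} = g ⁻¹' {m} := by
      ext α; simp [ULift.ext_iff, hmdef]
    rw [hpre, hmk] at hm
    have hfib : ∀ α ∈ g ⁻¹' {m}, (f α).1 m ≠ p.1 m := by
      intro α hα
      have h2 := hgspec α
      simp only [Set.mem_preimage, Set.mem_singleton_iff] at hα
      rwa [hα] at h2
    have hne : ∀ (n : ℕ), m ≤ n → ∀ α ∈ g ⁻¹' {m}, (f α).1 n ≠ p.1 n := by
      intro n h α hα heq
      apply hfib α hα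
      rw [← projLE_thread π (f α).1 (f α).2 h, heq, projLE_thread π p.1 p.2 h]
    rcases lt_trichotomy κ (aleph Ordinal.omega0) with hlt | heqc | hgt
    · obtain ⟨n₀, hn₀⟩ := lt_aleph_omega hlt
      set n := max m n₀ with hn
      set S := (fun α => (f α).1 n) '' (g ⁻¹' {m}) with hS
      have hS1 : S ⊆ {p.1 n}ᶜ := by
        rintro _ ⟨α, hα, rfl⟩
        exact hne n (le_max_left _ _) α hα
      have hS2 : #S < aleph n := by
        have h1 := Cardinal.mk_image_le_lift (f := fun α => (f α).1 n) (s := g ⁻¹' {m})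
        rw [Cardinal.lift_uzero, hm] at h1
        have h2 : κ < Cardinal.lift (aleph (n : Ordinal.{0})) := by
          rw [lift_aleph_nat]
          exact hn₀.trans_le (aleph_le_aleph.mpr (Nat.cast_le.mpr (le_max_right m n₀)))
        exact Cardinal.lift_lt.mp (h1.trans_lt h2)
      have hclos := hA n S hS1 hS2
      have hV : (fun y : {f : ∀ n, X n // ∀ n, π n (f (n + 1)) = f n} => y.1 n) ⁻¹'
          (closure S)ᶜ ∈ nhds p :=
        (isClosed_closure.isOpen_compl.preimage
          ((continuous_apply n).comp continuous_subtype_val)).mem_nhds hclos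
      refine absurd (hconv _ hV) (not_lt.mpr ?_)
      have hsubset : g ⁻¹' {m} ⊆ {α | f α ∉ (fun y : {f : ∀ n, X n // ∀ n, π n (f (n + 1)) = f n} =>
          y.1 n) ⁻¹' (closure S)ᶜ} := by
        intro α hα hmem
        exact hmem (subset_closure ⟨α, hα, rfl⟩)
      calc κ = #(g ⁻¹' {m}) := hm.symm
        _ ≤ _ := mk_le_mk_of_subset hsubset
    · exfalso
      have h1 := hreg.cof_eq
      rw [heqc, Cardinal.ord_aleph, Ordinal.cof_omega Ordinal.isSuccLimit_omega0, Ordinal.cof_omega0] at h1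
      rw [heqc, ← h1] at hκ
      exact lt_irrefl _ hκ
    · obtain ⟨B, hBbasis, hBcard⟩ := exists_basis_weight (Y := X m)
      set 𝒰 := {U | U ∈ B ∧ p.1 m ∈ U} with h𝒰
      have h𝒰card : #𝒰 ≤ #B := mk_le_mk_of_subset (fun U hU => hU.1)
      have hchoice : ∀ α : ↥(g ⁻¹' {m}), ∃ U : ↥𝒰, (f α.1).1 m ∉ U.1 := by
        intro α
        have hnh : {(f α.1).1 m}ᶜ ∈ nhds (p.1 m) :=
          isOpen_compl_singleton.mem_nhds (Ne.symm (hfib α.1 α.2))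
        obtain ⟨U, hUB, hpU, hUsub⟩ := hBbasis.mem_nhds_iff.mp hnh
        exact ⟨⟨U, hUB, hpU⟩, fun hmem => hUsub hmem rfl⟩
      obtain ⟨U', hU⟩ := Cardinal.infinite_pigeonhole
        (fun α : ↥(g ⁻¹' {m}) => ULift.up (hchoice α).choose)
        (by rw [hm]; exact hreg.aleph0_le)
        (by
          rw [Cardinal.mk_uLift, hm, hreg.cof_eq]
          calc Cardinal.lift #↥𝒰 ≤ Cardinal.lift (weight (X m)) :=
                Cardinal.lift_le.mpr (h𝒰card.trans_eq hBcard)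
            _ < Cardinal.lift (aleph Ordinal.omega0) := Cardinal.lift_lt.mpr (hB m)
            _ = aleph Ordinal.omega0 := lift_aleph_omega
            _ < κ := hgt)
      set U := U'.down with hUdef
      have hVnh : (fun y : {f : ∀ n, X n // ∀ n, π n (f (n + 1)) = f n} => y.1 m) ⁻¹'
          U.1 ∈ nhds p :=
        ((hBbasis.isOpen U.2.1).preimage
          ((continuous_apply m).comp continuous_subtype_val)).mem_nhds U.2.2
      refine absurd (hconv _ hVnh) (not_lt.mpr ?_)
      have hsub : Subtype.val '' ((fun α : ↥(g ⁻¹' {m}) => ULift.up (hchoice α).choose) ⁻¹' {U'}) ⊆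
          {α | f α ∉ (fun y : {f : ∀ n, X n // ∀ n, π n (f (n + 1)) = f n} => y.1 m) ⁻¹' U.1} := by
        rintro _ ⟨β, hβ, rfl⟩
        intro hmem
        have hspec := (hchoice β).choose_spec
        have hUeq : (hchoice β).choose = U := congrArg ULift.down hβ
        rw [hUeq] at hspec
        exact hspec hmem
      calc κ = #((fun α : ↥(g ⁻¹' {m}) => ULift.up (hchoice α).choose) ⁻¹' {U'}) :=
            (hU.trans hm).symm
        _ = #(Subtype.val '' ((fun α : ↥(g ⁻¹' {m}) => ULift.up (hchoice α).choose) ⁻¹' {U'})) :=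
            (mk_image_eq Subtype.val_injective).symm
        _ ≤ _ := mk_le_mk_of_subset hsub
  · intro hw
    have low : aleph Ordinal.omega0 ≤ character p := by
      apply le_character
      intro B hLB
      rw [aleph_omega_eq]
      apply ciSup_le
      intro n
      by_contra hlt
      push_neg at hlt
      have hch : ∀ U : ↥B, ∃ y : {f : ∀ n, X n // ∀ n, π n (f (n + 1)) = f n},
          y ∈ U.1 ∧ y.1 0 ≠ p.1 0 := fun U => by
        obtain ⟨y, hyU, hy0⟩ := exists_ne_zero π hcont hsurj p p hC U.1 (hLB.1 U.1 U.2)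
        exact ⟨y, hyU, hy0⟩
      set q := fun U : ↥B => (hch U).choose with hq
      set S := Set.range (fun U : ↥B => (q U).1 n) with hS
      have hS1 : S ⊆ {p.1 n}ᶜ := by
        rintro _ ⟨U, rfl⟩
        intro heq
        simp only [Set.mem_singleton_iff] at heq
        apply ((hch U).choose_spec).2
        rw [← bond_thread π (q U).1 (q U).2 n, ← bond_thread π p.1 p.2 n]
        exact congrArg (bond π n) heq
      have hS2 : #S < aleph n := lt_of_le_of_lt Cardinal.mk_range_le hlt
      have hclos := hA n S hS1 hS2
      have hV : (fun y : {f : ∀ n, X n // ∀ n, π n (f (n + 1)) = f n} => y.1 n) ⁻¹'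
          (closure S)ᶜ ∈ nhds p :=
        (isClosed_closure.isOpen_compl.preimage
          ((continuous_apply n).comp continuous_subtype_val)).mem_nhds hclos
      obtain ⟨U, hUB, hUV⟩ := hLB.2 _ hV
      have hqU : q ⟨U, hUB⟩ ∈ U := ((hch ⟨U, hUB⟩).choose_spec).1
      have := hUV hqU
      exact this (subset_closure ⟨⟨U, hUB⟩, rfl⟩)
    have hup : weight {f : ∀ n, X n // ∀ n, π n (f (n + 1)) = f n} ≤ aleph Ordinal.omega0 := by
      choose Bn hBn hBncard using fun n => exists_basis_weight (Y := X n)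
      set C := ⋃ n, (fun W => (fun y : {f : ∀ n, X n // ∀ n, π n (f (n + 1)) = f n} =>
        y.1 n) ⁻¹' W) '' (Bn n) with hCdef
      have hCbasis : IsTopologicalBasis C := by
        apply isTopologicalBasis_of_isOpen_of_nhds
        · intro u hu
          simp only [hCdef, Set.mem_iUnion, Set.mem_image] at hu
          obtain ⟨n, W, hW, rfl⟩ := hu
          exact ((hBn n).isOpen hW).preimage ((continuous_apply n).comp continuous_subtype_val)
        · intro a u ha hu
          obtain ⟨n, W, hWopen, haW, hWu⟩ := key_nbhd π hcont a u (hu.mem_nhds ha)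
          obtain ⟨W', hW'B, haW', hW'W⟩ := (hBn n).exists_subset_of_mem_open haW hWopen
          exact ⟨_, Set.mem_iUnion.mpr ⟨n, Set.mem_image_of_mem _ hW'B⟩, haW',
            fun y hy => hWu (hW'W hy)⟩
      have hCcard : #C ≤ aleph Ordinal.omega0 := by
        refine le_trans (Cardinal.mk_iUnion_le _) ?_
        rw [Cardinal.mk_nat]
        have hsup : ⨆ n, #((fun W => (fun y : {f : ∀ n, X n // ∀ n, π n (f (n + 1)) = f n} =>
            y.1 n) ⁻¹' W) '' (Bn n)) ≤ aleph Ordinal.omega0 :=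
          ciSup_le fun n => le_trans Cardinal.mk_image_le
            (((hBncard n).trans (hw n)).le.trans (aleph_le_aleph_omega n))
        calc ℵ₀ * ⨆ n, #((fun W => (fun y : {f : ∀ n, X n // ∀ n, π n (f (n + 1)) = f n} =>
            y.1 n) ⁻¹' W) '' (Bn n)) ≤ ℵ₀ * aleph Ordinal.omega0 := mul_le_mul_right hsup _
          _ = aleph Ordinal.omega0 :=
            Cardinal.mul_eq_right (aleph0_le_aleph _) (aleph0_le_aleph _) Cardinal.aleph0_ne_zero
      exact (weight_le hCbasis).trans hCcard
    have hcw := character_le_weight p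
    exact ⟨le_antisymm (hcw.trans hup) low, le_antisymm hup (low.trans hcw)⟩
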